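/- For 0 < λ < 1, equality λ·H_{P1}(A|B) + (1−λ)·H_{P2}(A|B) = H_{λP1+(1−λ)P2}(A|B) holds if and only if the conditional distributions agree: P1(a|b) = P2(a|b) for all (a,b) with (λP1+(1−λ)P2)(b) > 0. -/

import Mathlib

open scoped BigOperators
noncomputable section

/-- A joint probability distribution of two random variables `A`, `B` with finite state
spaces, given as a function `A → B → ℝ`. -/
def IsJointDist {A B : Type*} [Fintype A] [Fintype B] (P : A → B → ℝ) : Prop :=
  (∀ a b, 0 ≤ P a b) ∧ ∑ a, ∑ b, P a b = 1

/-- The conditional entropy `H_P(A|B) = -∑_{a,b} P(a,b) log (P(a,b)/P(b))`. -/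
def condEnt {A B : Type*} [Fintype A] [Fintype B] (P : A → B → ℝ) : ℝ :=
  ∑ b, ∑ a, -(P a b * Real.log (P a b / ∑ a', P a' b))

/-- Two-term log-sum inequality with equality condition. -/
lemma logsum_aux (x y s t : ℝ) (hx : 0 ≤ x) (hy : 0 ≤ y) (hxs : x ≤ s) (hyt : y ≤ t) :
    (x + y) * Real.log ((x + y) / (s + t)) ≤ x * Real.log (x / s) + y * Real.log (y / t)
    ∧ ((x + y) * Real.log ((x + y) / (s + t)) = x * Real.log (x / s) + y * Real.log (y / t)
        ↔ x * t = y * s) := by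
  have hs : 0 ≤ s := hx.trans hxs
  have ht : 0 ≤ t := hy.trans hyt
  rcases hs.eq_or_lt with hs0 | hs0
  · have hx0 : x = 0 := le_antisymm (hs0 ▸ hxs) hx
    subst hx0; rw [← hs0]; simp
  rcases ht.eq_or_lt with ht0 | ht0
  · have hy0 : y = 0 := le_antisymm (ht0 ▸ hyt) hy
    subst hy0; rw [← ht0]; simp
  have hst : 0 < s + t := by linarith
  have hsne := hs0.ne'
  have htne := ht0.ne'
  have hstne := hst.ne'
  have hsum : s / (s + t) * (x / s) + t / (s + t) * (y / t) = (x + y) / (s + t) := by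
    field_simp
  rcases eq_or_ne (x * t) (y * s) with heq | hne
  · -- equality case
    have h1 : (x + y) / (s + t) = x / s := by
      rw [div_eq_div_iff hstne hsne]; linear_combination -heq
    have h2 : y / t = x / s := by
      rw [div_eq_div_iff htne hsne]; linear_combination -heq
    have hE : (x + y) * Real.log ((x + y) / (s + t))
        = x * Real.log (x / s) + y * Real.log (y / t) := by
      rw [h1, h2]; ring
    exact ⟨le_of_eq hE, by simp [hE, heq]⟩
  · -- strict case
    have hpq : x / s ≠ y / t := fun h => hne ((div_eq_div_iff hsne htne).1 h)
    have ha : 0 < s / (s + t) := by positivity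
    have hb : 0 < t / (s + t) := by positivity
    have hab : s / (s + t) + t / (s + t) = 1 := by field_simp
    have hlt := Real.strictConvexOn_mul_log.2 (Set.mem_Ici.2 (by positivity : (0:ℝ) ≤ x / s))
      (Set.mem_Ici.2 (by positivity : (0:ℝ) ≤ y / t)) hpq ha hb hab
    simp only [smul_eq_mul, hsum] at hlt
    have hlt2 := mul_lt_mul_of_pos_left hlt hst
    have E0 : (s + t) * ((x + y) / (s + t) * Real.log ((x + y) / (s + t)))
        = (x + y) * Real.log ((x + y) / (s + t)) := by
      field_simp
    have E1 : (s + t) * (s / (s + t) * (x / s * Real.log (x / s))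
          + t / (s + t) * (y / t * Real.log (y / t)))
        = x * Real.log (x / s) + y * Real.log (y / t) := by
      field_simp
    rw [E0, E1] at hlt2
    exact ⟨hlt2.le, by constructor <;> intro h <;> [exact absurd h hlt2.ne; exact absurd h hne]⟩

/-- For `0 < λ < 1`, equality in the concavity inequality for conditional entropy
holds if and only if the conditional distributions agree:
`P1(a|b) = P2(a|b)` for all `(a,b)` such that the `B`-marginal of the mixture is
positive (the conditional `Pi(a|b) = Pi(a,b)/Pi(b)` being defined when `Pi(b) > 0`). -/
theorem condEnt_strictly_concave_iff {A B : Type*} [Fintype A] [Fintype B]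
    (P1 P2 : A → B → ℝ) (hP1 : IsJointDist P1) (hP2 : IsJointDist P2)
    (l : ℝ) (hl0 : 0 < l) (hl1 : l < 1) :
    l * condEnt P1 + (1 - l) * condEnt P2 =
        condEnt (fun a b => l * P1 a b + (1 - l) * P2 a b) ↔
      ∀ a b, (0 < ∑ a', (l * P1 a' b + (1 - l) * P2 a' b)) →
        (0 < ∑ a', P1 a' b) → (0 < ∑ a', P2 a' b) →
        P1 a b / (∑ a', P1 a' b) = P2 a b / (∑ a', P2 a' b) := by
  have hl1' : 0 < 1 - l := by linarith
  set F : A → B → ℝ := fun a b =>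
    -((l * P1 a b + (1 - l) * P2 a b) *
      Real.log ((l * P1 a b + (1 - l) * P2 a b) /
        (l * ∑ a', P1 a' b + (1 - l) * ∑ a', P2 a' b))) with hF
  set G : A → B → ℝ := fun a b =>
    l * -(P1 a b * Real.log (P1 a b / ∑ a', P1 a' b)) +
      (1 - l) * -(P2 a b * Real.log (P2 a b / ∑ a', P2 a' b)) with hG
  have hmar : ∀ b : B, (∑ a', (l * P1 a' b + (1 - l) * P2 a' b))
      = l * (∑ a', P1 a' b) + (1 - l) * (∑ a', P2 a' b) := by
    intro b
    rw [Finset.sum_add_distrib, Finset.mul_sum, Finset.mul_sum]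
  have hA : l * condEnt P1 + (1 - l) * condEnt P2 = ∑ b, ∑ a, G a b := by
    simp only [condEnt, Finset.mul_sum, ← Finset.sum_add_distrib, hG]
  have hB : condEnt (fun a b => l * P1 a b + (1 - l) * P2 a b) = ∑ b, ∑ a, F a b := by
    simp only [condEnt]
    refine Finset.sum_congr rfl fun b _ => Finset.sum_congr rfl fun a _ => ?_
    rw [hmar b]
  have hpoint : ∀ a b, G a b ≤ F a b ∧
      (F a b = G a b ↔ (l * P1 a b) * ((1 - l) * ∑ a', P2 a' b)
        = ((1 - l) * P2 a b) * (l * ∑ a', P1 a' b)) := by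
    intro a b
    have h1 : P1 a b ≤ ∑ a', P1 a' b :=
      Finset.single_le_sum (fun i _ => hP1.1 i b) (Finset.mem_univ a)
    have h2 : P2 a b ≤ ∑ a', P2 a' b :=
      Finset.single_le_sum (fun i _ => hP2.1 i b) (Finset.mem_univ a)
    have key := logsum_aux (l * P1 a b) ((1 - l) * P2 a b)
      (l * ∑ a', P1 a' b) ((1 - l) * ∑ a', P2 a' b)
      (mul_nonneg hl0.le (hP1.1 a b)) (mul_nonneg hl1'.le (hP2.1 a b))
      (mul_le_mul_of_nonneg_left h1 hl0.le)
      (mul_le_mul_of_nonneg_left h2 hl1'.le)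
    have e1 : (l * P1 a b) * Real.log ((l * P1 a b) / (l * ∑ a', P1 a' b))
        = l * (P1 a b * Real.log (P1 a b / ∑ a', P1 a' b)) := by
      rw [mul_div_mul_left _ _ hl0.ne']; ring
    have e2 : ((1 - l) * P2 a b) * Real.log (((1 - l) * P2 a b) / ((1 - l) * ∑ a', P2 a' b))
        = (1 - l) * (P2 a b * Real.log (P2 a b / ∑ a', P2 a' b)) := by
      rw [mul_div_mul_left _ _ hl1'.ne']; ring
    rw [e1, e2] at key
    constructor
    · simp only [hF, hG]
      have := key.1
      nlinarith [key.1]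
    · simp only [hF, hG]
      rw [← key.2]
      constructor <;> intro h <;> linarith
  rw [hA, hB]
  constructor
  · intro h a b hQb h1b h2b
    have houter : ∀ b ∈ Finset.univ, (∑ a, G a b) ≤ ∑ a, F a b :=
      fun b _ => Finset.sum_le_sum fun a _ => (hpoint a b).1
    have hb' := (Finset.sum_eq_sum_iff_of_le houter).1 h b (Finset.mem_univ b)
    have ha' := (Finset.sum_eq_sum_iff_of_le
      (fun a _ => (hpoint a b).1)).1 hb' a (Finset.mem_univ a)
    have hmul := (hpoint a b).2.1 ha'.symm
    rw [div_eq_div_iff h1b.ne' h2b.ne']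
    have hc : l * (1 - l) ≠ 0 := by positivity
    have : l * (1 - l) * (P1 a b * ∑ a', P2 a' b)
        = l * (1 - l) * (P2 a b * ∑ a', P1 a' b) := by linear_combination hmul
    exact mul_left_cancel₀ hc this
  · intro h
    refine Finset.sum_congr rfl fun b _ => Finset.sum_congr rfl fun a _ => ?_
    refine (((hpoint a b).2).2 ?_).symm
    have hm1 : 0 ≤ ∑ a', P1 a' b := Finset.sum_nonneg fun i _ => hP1.1 i b
    have hm2 : 0 ≤ ∑ a', P2 a' b := Finset.sum_nonneg fun i _ => hP2.1 i b
    rcases hm1.eq_or_lt with e1 | e1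
    · have hz : P1 a b = 0 :=
        (Finset.sum_eq_zero_iff_of_nonneg (fun i _ => hP1.1 i b)).1 e1.symm a (Finset.mem_univ a)
      rw [hz, ← e1]; ring
    rcases hm2.eq_or_lt with e2 | e2
    · have hz : P2 a b = 0 :=
        (Finset.sum_eq_zero_iff_of_nonneg (fun i _ => hP2.1 i b)).1 e2.symm a (Finset.mem_univ a)
      rw [hz, ← e2]; ring
    have hQ : 0 < ∑ a', (l * P1 a' b + (1 - l) * P2 a' b) := by
      rw [hmar b]; positivity
    have hdiv := h a b hQ e1 e2
    have := (div_eq_div_iff e1.ne' e2.ne').1 hdiv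
    linear_combination (l * (1 - l)) * this
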